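/- Consider the restless-bandit LP with a fixed population, i.e. λ_k = 0 for every class k (so that constraint (iii) is imposed for every k). If the feasible set of (LP) is nonempty, then (LP) admits an optimal solution x* = (x*^a_{j,k}) with the property that x*^0_{j,k} · x*^1_{j,k} > 0 for at most one pair (j,k); that is, with the possible exception of a single state–class pair, every pair (j,k) has x*^0_{j,k} = 0 or x*^1_{j,k} = 0. -/

import Mathlib

open Finset

/-- Feasibility for the restless-bandit LP:
(i) balance equations, (ii) capacity constraint, (iii) fixed total mass for classes with
zero arrival rate, (iv) nonnegativity.  Here `x k j a` is the mass of class-`k` bandits in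
state `j` under action `a`, and `q k j i a` is the transition rate `q_k(j|i,a)`. -/
def LPFeasible {K : ℕ} {J : Fin K → ℕ} (lam : Fin K → ℝ)
    (p : (k : Fin K) → Fin (J k) → ℝ)
    (q : (k : Fin K) → Fin (J k) → Fin (J k) → Fin 2 → ℝ)
    (α : ℝ) (xinit : Fin K → ℝ)
    (x : (k : Fin K) → Fin (J k) → Fin 2 → ℝ) : Prop :=
  (∀ k j, 0 = lam k * p k j + ∑ a : Fin 2, ∑ i, x k i a * q k j i a) ∧
  (∑ k, ∑ j, x k j 1 ≤ α) ∧
  (∀ k, lam k = 0 → ∑ j, ∑ a : Fin 2, x k j a = xinit k) ∧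
  (∀ k j a, 0 ≤ x k j a)

/-- The objective of the restless-bandit LP. -/
def LPCost {K : ℕ} {J : Fin K → ℕ}
    (C : (k : Fin K) → Fin (J k) → Fin 2 → ℝ)
    (x : (k : Fin K) → Fin (J k) → Fin 2 → ℝ) : ℝ :=
  ∑ k, ∑ j, ∑ a : Fin 2, C k j a * x k j a


section AuxDefs

open scoped Classical

variable {K : ℕ} {J : Fin K → ℕ}

/-- The support index type of a candidate solution. -/
private abbrev SuppT (x : (k : Fin K) → Fin (J k) → Fin 2 → ℝ) : Type :=
  {p : Σ k : Fin K, Fin (J k) × Fin 2 // 0 < x p.1 p.2.1 p.2.2}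

/-- Extension by zero of a function on the support. -/
private noncomputable def extz (x : (k : Fin K) → Fin (J k) → Fin 2 → ℝ)
    (d : SuppT x → ℝ) : (k : Fin K) → Fin (J k) → Fin 2 → ℝ :=
  fun k j a => if h : 0 < x k j a then d ⟨⟨k, (j, a)⟩, h⟩ else 0

private lemma extz_add (x : (k : Fin K) → Fin (J k) → Fin 2 → ℝ)
    (d e : SuppT x → ℝ) : extz x (d + e) = extz x d + extz x e := by
  funext k j a
  simp only [extz, Pi.add_apply]
  split <;> simp

private lemma extz_smul (x : (k : Fin K) → Fin (J k) → Fin 2 → ℝ)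
    (c : ℝ) (d : SuppT x → ℝ) : extz x (c • d) = c • extz x d := by
  funext k j a
  simp only [extz, Pi.smul_apply, smul_eq_mul]
  split <;> simp

/-- Balance row. -/
private def browF (q : (k : Fin K) → Fin (J k) → Fin (J k) → Fin 2 → ℝ)
    (y : (k : Fin K) → Fin (J k) → Fin 2 → ℝ) (k : Fin K) (j : Fin (J k)) : ℝ :=
  ∑ a : Fin 2, ∑ i, y k i a * q k j i a

/-- Mass row. -/
private def mrowF (y : (k : Fin K) → Fin (J k) → Fin 2 → ℝ) (k : Fin K) : ℝ :=
  ∑ j, ∑ a : Fin 2, y k j a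

/-- Capacity row. -/
private def crowF (y : (k : Fin K) → Fin (J k) → Fin 2 → ℝ) : ℝ :=
  ∑ k, ∑ j, y k j 1

/-- The row index type used in the rank argument. -/
private abbrev RowT (x : (k : Fin K) → Fin (J k) → Fin 2 → ℝ)
    (j₀ : (k : Fin K) → Fin (J k)) : Type :=
  {o : Σ k : Fin K, Fin (J k) // (∃ a, 0 < x o.1 o.2 a) ∧ o.2 ≠ j₀ o.1} ⊕
    ({k : Fin K // ∃ j a, 0 < x k j a} ⊕ Unit)

private noncomputable def Tmap (x : (k : Fin K) → Fin (J k) → Fin 2 → ℝ)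
    (q : (k : Fin K) → Fin (J k) → Fin (J k) → Fin 2 → ℝ)
    (j₀ : (k : Fin K) → Fin (J k)) :
    (SuppT x → ℝ) →ₗ[ℝ] (RowT x j₀ → ℝ) where
  toFun d r :=
    Sum.rec (fun o => browF q (extz x d) o.1.1 o.1.2)
      (fun r' => Sum.rec (fun c => mrowF (extz x d) c.1)
        (fun _ => crowF (extz x d)) r') r
  map_add' d e := by
    funext r
    rcases r with o | c | u <;>
      simp [extz_add, browF, mrowF, crowF, add_mul, Finset.sum_add_distrib]
  map_smul' c d := by
    funext r
    rcases r with o | cc | u <;>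
      simp [extz_smul, browF, mrowF, crowF, Finset.mul_sum, mul_assoc, mul_add]

private lemma sum_add_two_le {ι : Type*} [DecidableEq ι] {u : Finset ι} {g h : ι → ℕ}
    {s t : ι} (hs : s ∈ u) (ht : t ∈ u) (hst : s ≠ t)
    (hle : ∀ i ∈ u, g i ≤ h i) (h1 : g s + 1 ≤ h s) (h2 : g t + 1 ≤ h t) :
    (∑ i ∈ u, g i) + 2 ≤ ∑ i ∈ u, h i := by
  have ht' : t ∈ u.erase s := Finset.mem_erase.mpr ⟨fun hh => hst hh.symm, ht⟩
  rw [← Finset.add_sum_erase u h hs, ← Finset.add_sum_erase u g hs,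
    ← Finset.add_sum_erase _ h ht', ← Finset.add_sum_erase _ g ht']
  have hrest : ∑ i ∈ (u.erase s).erase t, g i ≤ ∑ i ∈ (u.erase s).erase t, h i :=
    Finset.sum_le_sum fun i hi =>
      hle i (Finset.mem_of_mem_erase (Finset.mem_of_mem_erase hi))
  omega

end AuxDefs

section PerturbLemma

open scoped Classical

private lemma exists_perturbation
    {K : ℕ} {J : Fin K → ℕ} (hJ : ∀ k, 1 ≤ J k)
    (q : (k : Fin K) → Fin (J k) → Fin (J k) → Fin 2 → ℝ)
    (q0 : (k : Fin K) → Fin (J k) → Fin 2 → ℝ)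
    (hq : ∀ k (j i : Fin (J k)) (a : Fin 2), j ≠ i → 0 ≤ q k j i a)
    (hq0 : ∀ k (i : Fin (J k)) (a : Fin 2), 0 ≤ q0 k i a)
    (hdiag : ∀ k (j : Fin (J k)) (a : Fin 2),
      q k j j a = -(q0 k j a + ∑ i ∈ univ.filter (fun i => i ≠ j), q k i j a))
    (x : (k : Fin K) → Fin (J k) → Fin 2 → ℝ)
    (hbal : ∀ k j, ∑ a : Fin 2, ∑ i, x k i a * q k j i a = 0)
    (hxnn : ∀ k j a, 0 ≤ x k j a)
    (s t : Σ k : Fin K, Fin (J k)) (hst : s ≠ t)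
    (hs0 : 0 < x s.1 s.2 0) (hs1 : 0 < x s.1 s.2 1)
    (ht0 : 0 < x t.1 t.2 0) (ht1 : 0 < x t.1 t.2 1) :
    ∃ w : (k : Fin K) → Fin (J k) → Fin 2 → ℝ,
      w ≠ 0 ∧ (∀ k j a, |w k j a| ≤ x k j a) ∧
      (∀ k j, ∑ a : Fin 2, ∑ i, w k i a * q k j i a = 0) ∧
      (∀ k, ∑ j, ∑ a : Fin 2, w k j a = 0) ∧
      (∑ k, ∑ j, w k j 1 = 0) := by
  -- column sums
  have hcol : ∀ k (i : Fin (J k)) (a : Fin 2), ∑ j, q k j i a = -q0 k i a := by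
    intro k i a
    rw [← Finset.add_sum_erase _ _ (mem_univ i), hdiag k i a, ← Finset.filter_ne' univ i]
    ring
  -- row sums of balance rows
  have hrowsum : ∀ (y : (k : Fin K) → Fin (J k) → Fin 2 → ℝ) k,
      ∑ j, ∑ a : Fin 2, ∑ i, y k i a * q k j i a
        = -(∑ a : Fin 2, ∑ i, y k i a * q0 k i a) := by
    intro y k
    rw [Finset.sum_comm]
    rw [Finset.sum_congr rfl fun a _ => Finset.sum_comm]
    have : ∀ a : Fin 2, ∀ i : Fin (J k), ∑ j, y k i a * q k j i a = -(y k i a * q0 k i a) := by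
      intro a i
      rw [← Finset.mul_sum, hcol k i a]
      ring
    simp only [this, Finset.sum_neg_distrib]
  -- active departure rates vanish
  have hq0x : ∀ k (i : Fin (J k)) (a : Fin 2), 0 < x k i a → q0 k i a = 0 := by
    intro k i a hx
    have h0 : ∑ a : Fin 2, ∑ i, x k i a * q0 k i a = 0 := by
      have := hrowsum x k
      simp only [hbal, Finset.sum_const_zero] at this
      linarith
    have hnn : ∀ a ∈ (univ : Finset (Fin 2)), 0 ≤ ∑ i, x k i a * q0 k i a :=
      fun a _ => Finset.sum_nonneg fun i _ => mul_nonneg (hxnn k i a) (hq0 k i a)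
    have h1 := (Finset.sum_eq_zero_iff_of_nonneg hnn).mp h0 a (mem_univ a)
    have hnn2 : ∀ i ∈ (univ : Finset (Fin (J k))), 0 ≤ x k i a * q0 k i a :=
      fun i _ => mul_nonneg (hxnn k i a) (hq0 k i a)
    have h2 := (Finset.sum_eq_zero_iff_of_nonneg hnn2).mp h1 i (mem_univ i)
    rcases mul_eq_zero.mp h2 with h | h
    · exact absurd h (ne_of_gt hx)
    · exact h
  -- inflow rates into unoccupied states vanish on the support
  have hqjix : ∀ k (j : Fin (J k)), (∀ a, x k j a = 0) →
      ∀ (a : Fin 2) (i : Fin (J k)), i ≠ j → 0 < x k i a → q k j i a = 0 := by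
    intro k j hj a i hij hx
    have hnn : ∀ a ∈ (univ : Finset (Fin 2)), 0 ≤ ∑ i, x k i a * q k j i a := by
      intro a _
      apply Finset.sum_nonneg
      intro i _
      by_cases hij' : i = j
      · subst hij'; rw [hj a]; simp
      · exact mul_nonneg (hxnn k i a) (hq k j i a fun hh => hij' hh.symm)
    have h1 := (Finset.sum_eq_zero_iff_of_nonneg hnn).mp (hbal k j) a (mem_univ a)
    have hnn2 : ∀ i ∈ (univ : Finset (Fin (J k))), 0 ≤ x k i a * q k j i a := by
      intro i _
      by_cases hij' : i = j
      · subst hij'; rw [hj a]; simp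
      · exact mul_nonneg (hxnn k i a) (hq k j i a fun hh => hij' hh.symm)
    have h2 := (Finset.sum_eq_zero_iff_of_nonneg hnn2).mp h1 i (mem_univ i)
    rcases mul_eq_zero.mp h2 with h | h
    · exact absurd h (ne_of_gt hx)
    · exact h
  -- distinguished occupied state in each occupied class
  obtain ⟨j₀, hj₀⟩ : ∃ j₀ : ∀ k, Fin (J k), ∀ k, (∃ j a, 0 < x k j a) →
      ∃ a, 0 < x k (j₀ k) a := by
    refine ⟨fun k => if h : ∃ j a, 0 < x k j a then h.choose else ⟨0, hJ k⟩, fun k h => ?_⟩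
    simp only [dif_pos h]
    exact h.choose_spec
  -- cardinality comparison
  have hcard : Fintype.card (RowT x j₀) < Fintype.card (SuppT x) := by
    have cardP : Fintype.card (SuppT x)
        = (univ.filter fun p : Σ k : Fin K, Fin (J k) × Fin 2 =>
            0 < x p.1 p.2.1 p.2.2).card := Fintype.card_subtype _
    have cardW1 : Fintype.card {o : Σ k : Fin K, Fin (J k) //
          (∃ a, 0 < x o.1 o.2 a) ∧ o.2 ≠ j₀ o.1}
        = (univ.filter fun o : Σ k : Fin K, Fin (J k) =>
            (∃ a, 0 < x o.1 o.2 a) ∧ o.2 ≠ j₀ o.1).card := Fintype.card_subtype _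
    have cardW2 : Fintype.card {k : Fin K // ∃ j a, 0 < x k j a}
        = (univ.filter fun k : Fin K => ∃ j a, 0 < x k j a).card := Fintype.card_subtype _
    have cardR : Fintype.card (RowT x j₀)
        = (univ.filter fun o : Σ k : Fin K, Fin (J k) =>
            (∃ a, 0 < x o.1 o.2 a) ∧ o.2 ≠ j₀ o.1).card
          + ((univ.filter fun k : Fin K => ∃ j a, 0 < x k j a).card + 1) := by
      have hre : Fintype.card (RowT x j₀) = Fintype.card
          ({o : Σ k : Fin K, Fin (J k) // (∃ a, 0 < x o.1 o.2 a) ∧ o.2 ≠ j₀ o.1} ⊕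
            ({k : Fin K // ∃ j a, 0 < x k j a} ⊕ Unit)) := rfl
      rw [hre, Fintype.card_sum, Fintype.card_sum, cardW1, cardW2, Fintype.card_unit]
    -- split of occupied states by being distinguished or not
    have hsplit : ((univ.filter fun o : Σ k : Fin K, Fin (J k) =>
            ∃ a, 0 < x o.1 o.2 a).filter fun o => o.2 = j₀ o.1).card
        + ((univ.filter fun o : Σ k : Fin K, Fin (J k) =>
            ∃ a, 0 < x o.1 o.2 a).filter fun o => ¬ o.2 = j₀ o.1).card
        = (univ.filter fun o : Σ k : Fin K, Fin (J k) => ∃ a, 0 < x o.1 o.2 a).card :=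
      Finset.card_filter_add_card_filter_not _
    have hW1eq : (univ.filter fun o : Σ k : Fin K, Fin (J k) =>
            (∃ a, 0 < x o.1 o.2 a) ∧ o.2 ≠ j₀ o.1)
        = ((univ.filter fun o : Σ k : Fin K, Fin (J k) =>
            ∃ a, 0 < x o.1 o.2 a).filter fun o => ¬ o.2 = j₀ o.1) := by
      rw [Finset.filter_filter]
    -- distinguished occupied states biject with occupied classes
    have hD0 : ((univ.filter fun o : Σ k : Fin K, Fin (J k) =>
            ∃ a, 0 < x o.1 o.2 a).filter fun o => o.2 = j₀ o.1).card
        = (univ.filter fun k : Fin K => ∃ j a, 0 < x k j a).card := by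
      symm
      apply Finset.card_bij (fun k _ => (⟨k, j₀ k⟩ : Σ k : Fin K, Fin (J k)))
      · intro k hk
        exact Finset.mem_filter.mpr ⟨Finset.mem_filter.mpr
          ⟨mem_univ _, hj₀ k (by simpa using hk)⟩, rfl⟩
      · intro k1 h1 k2 h2 heq
        exact congrArg Sigma.fst heq
      · intro o ho
        have h1 := (Finset.mem_filter.mp ho).2
        obtain ⟨a, ha⟩ := (Finset.mem_filter.mp (Finset.mem_filter.mp ho).1).2
        refine ⟨o.1, Finset.mem_filter.mpr ⟨mem_univ _, ⟨o.2, a, ha⟩⟩, ?_⟩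
        rw [← h1]
      -- occupied pairs + 2 ≤ support size
    have hocc2 : (univ.filter fun o : Σ k : Fin K, Fin (J k) =>
            ∃ a, 0 < x o.1 o.2 a).card + 2
        ≤ (univ.filter fun p : Σ k : Fin K, Fin (J k) × Fin 2 =>
            0 < x p.1 p.2.1 p.2.2).card := by
      have hfiber : (univ.filter fun p : Σ k : Fin K, Fin (J k) × Fin 2 =>
            0 < x p.1 p.2.1 p.2.2).card
          = ∑ o ∈ (univ : Finset (Σ k : Fin K, Fin (J k))),
              ((univ.filter fun p : Σ k : Fin K, Fin (J k) × Fin 2 =>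
                0 < x p.1 p.2.1 p.2.2).filter
                  fun p => (⟨p.1, p.2.1⟩ : Σ k : Fin K, Fin (J k)) = o).card :=
        Finset.card_eq_sum_card_fiberwise (fun p _ => mem_univ _)
      have hoccsum : (univ.filter fun o : Σ k : Fin K, Fin (J k) =>
            ∃ a, 0 < x o.1 o.2 a).card
          = ∑ o ∈ (univ : Finset (Σ k : Fin K, Fin (J k))),
              (if ∃ a, 0 < x o.1 o.2 a then 1 else 0) := Finset.card_filter _ _
      rw [hfiber, hoccsum]
      have hfib1 : ∀ o ∈ (univ : Finset (Σ k : Fin K, Fin (J k))),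
          (if ∃ a, 0 < x o.1 o.2 a then 1 else 0)
          ≤ ((univ.filter fun p : Σ k : Fin K, Fin (J k) × Fin 2 =>
              0 < x p.1 p.2.1 p.2.2).filter
                fun p => (⟨p.1, p.2.1⟩ : Σ k : Fin K, Fin (J k)) = o).card := by
        intro o _
        split
        · next h =>
          obtain ⟨a, ha⟩ := h
          apply Finset.card_pos.mpr
          exact ⟨⟨o.1, (o.2, a)⟩,
            Finset.mem_filter.mpr ⟨Finset.mem_filter.mpr ⟨mem_univ _, ha⟩, rfl⟩⟩
        · exact Nat.zero_le _
      have hfib2 : ∀ o : Σ k : Fin K, Fin (J k), 0 < x o.1 o.2 0 → 0 < x o.1 o.2 1 →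
          (if ∃ a, 0 < x o.1 o.2 a then 1 else 0) + 1
          ≤ ((univ.filter fun p : Σ k : Fin K, Fin (J k) × Fin 2 =>
              0 < x p.1 p.2.1 p.2.2).filter
                fun p => (⟨p.1, p.2.1⟩ : Σ k : Fin K, Fin (J k)) = o).card := by
        intro o h0 h1
        rw [if_pos ⟨0, h0⟩]
        have hsub : ({⟨o.1, (o.2, 0)⟩, ⟨o.1, (o.2, 1)⟩} :
            Finset (Σ k : Fin K, Fin (J k) × Fin 2))
            ⊆ ((univ.filter fun p : Σ k : Fin K, Fin (J k) × Fin 2 =>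
              0 < x p.1 p.2.1 p.2.2).filter
                fun p => (⟨p.1, p.2.1⟩ : Σ k : Fin K, Fin (J k)) = o) := by
          intro p hp
          simp only [Finset.mem_insert, Finset.mem_singleton] at hp
          rcases hp with rfl | rfl
          · exact Finset.mem_filter.mpr ⟨Finset.mem_filter.mpr ⟨mem_univ _, h0⟩, rfl⟩
          · exact Finset.mem_filter.mpr ⟨Finset.mem_filter.mpr ⟨mem_univ _, h1⟩, rfl⟩
        have hne : (⟨o.1, (o.2, 0)⟩ : Σ k : Fin K, Fin (J k) × Fin 2)
            ≠ ⟨o.1, (o.2, 1)⟩ := by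
          simp [Sigma.mk.inj_iff]
        have := Finset.card_le_card hsub
        rw [Finset.card_pair hne] at this
        omega
      exact sum_add_two_le (mem_univ s) (mem_univ t) hst hfib1
        (hfib2 s hs0 hs1) (hfib2 t ht0 ht1)
    rw [cardP, cardR, hW1eq]
    omega
  -- extract a nonzero kernel element
  have hninj : ¬ Function.Injective (Tmap x q j₀) := by
    intro hinj
    have hle := LinearMap.finrank_le_finrank_of_injective hinj
    rw [Module.finrank_fintype_fun_eq_card, Module.finrank_fintype_fun_eq_card] at hle
    omega
  rw [Function.not_injective_iff] at hninj
  obtain ⟨d1, d2, hTde, hde⟩ := hninj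
  set d0 : SuppT x → ℝ := d1 - d2 with hd0def
  have hT0 : Tmap x q j₀ d0 = 0 := by
    rw [hd0def, map_sub, hTde, sub_self]
  have hd0 : d0 ≠ 0 := sub_ne_zero.mpr hde
  set z : (k : Fin K) → Fin (J k) → Fin 2 → ℝ := extz x d0 with hzdef
  have hzsupp : ∀ k j a, ¬ (0 < x k j a) → z k j a = 0 := by
    intro k j a h
    simp only [hzdef, extz, dif_neg h]
  have hz0 : z ≠ 0 := by
    intro hcontra
    apply hd0
    funext pp
    have : z pp.1.1 pp.1.2.1 pp.1.2.2 = 0 := by rw [hcontra]; rfl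
    exact (by simpa only [hzdef, extz, dif_pos pp.2] using this :
      d0 ⟨⟨pp.1.1, (pp.1.2.1, pp.1.2.2)⟩, pp.2⟩ = 0)
  -- rows from the kernel equation
  have hbrow2 : ∀ (o : Σ k : Fin K, Fin (J k)),
      (∃ a, 0 < x o.1 o.2 a) → o.2 ≠ j₀ o.1 → browF q z o.1 o.2 = 0 := by
    intro o h1 h2
    exact congrFun hT0 (Sum.inl ⟨o, h1, h2⟩)
  have hmrow : ∀ k, (∃ j a, 0 < x k j a) → mrowF z k = 0 := by
    intro k h
    exact congrFun hT0 (Sum.inr (Sum.inl ⟨k, h⟩))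
  have hcrow : crowF z = 0 := congrFun hT0 (Sum.inr (Sum.inr ()))
  -- balance row at unoccupied states
  have hbrow1 : ∀ k (j : Fin (J k)), ¬ (∃ a, 0 < x k j a) → browF q z k j = 0 := by
    intro k j h
    have hxj : ∀ a, x k j a = 0 := fun a =>
      le_antisymm (not_lt.mp fun hh => h ⟨a, hh⟩) (hxnn k j a)
    apply Finset.sum_eq_zero
    intro a _
    apply Finset.sum_eq_zero
    intro i _
    by_cases hzi : z k i a = 0
    · rw [hzi, zero_mul]
    · have hxi : 0 < x k i a := by
        by_contra hc
        exact hzi (hzsupp k i a hc)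
      by_cases hij : i = j
      · subst hij
        exact absurd (hxj a) (ne_of_gt hxi)
      · rw [hqjix k j hxj a i hij hxi, mul_zero]
  -- sum of balance rows vanishes
  have hbrowsum : ∀ k, ∑ j, browF q z k j = 0 := by
    intro k
    show ∑ j, ∑ a : Fin 2, ∑ i, z k i a * q k j i a = 0
    rw [hrowsum z k, neg_eq_zero]
    apply Finset.sum_eq_zero
    intro a _
    apply Finset.sum_eq_zero
    intro i _
    by_cases hzi : z k i a = 0
    · rw [hzi, zero_mul]
    · have hxi : 0 < x k i a := by
        by_contra hc
        exact hzi (hzsupp k i a hc)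
      rw [hq0x k i a hxi, mul_zero]
  -- all balance rows vanish
  have hbrowAll : ∀ k (j : Fin (J k)), browF q z k j = 0 := by
    intro k j
    by_cases hj : j = j₀ k
    · subst hj
      have hsum := hbrowsum k
      rw [← Finset.add_sum_erase _ _ (mem_univ (j₀ k))] at hsum
      have hrest : ∑ j' ∈ univ.erase (j₀ k), browF q z k j' = 0 := by
        apply Finset.sum_eq_zero
        intro j' hj'
        have hne : j' ≠ j₀ k := (Finset.mem_erase.mp hj').1
        by_cases hocc : ∃ a, 0 < x k j' a
        · exact hbrow2 ⟨k, j'⟩ hocc hne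
        · exact hbrow1 k j' hocc
      rw [hrest] at hsum
      linarith
    · by_cases hocc : ∃ a, 0 < x k j a
      · exact hbrow2 ⟨k, j⟩ hocc hj
      · exact hbrow1 k j hocc
  -- all mass rows vanish
  have hmrowAll : ∀ k, mrowF z k = 0 := by
    intro k
    by_cases hocc : ∃ j a, 0 < x k j a
    · exact hmrow k hocc
    · apply Finset.sum_eq_zero
      intro j _
      apply Finset.sum_eq_zero
      intro a _
      exact hzsupp k j a fun hh => hocc ⟨j, a, hh⟩
  -- scaling
  set ε : ℝ := Finset.inf' (univ : Finset (Σ k : Fin K, Fin (J k) × Fin 2))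
      ⟨⟨s.1, (s.2, 0)⟩, mem_univ _⟩
      (fun p => if 0 < x p.1 p.2.1 p.2.2
        then x p.1 p.2.1 p.2.2 / (|z p.1 p.2.1 p.2.2| + 1) else 1) with hεdef
  have hε : 0 < ε := by
    rw [hεdef]
    apply (Finset.lt_inf'_iff ..).mpr
    intro p _
    split
    · next h => exact div_pos h (by positivity)
    · exact one_pos
  have hbound : ∀ k j a, ε * |z k j a| ≤ x k j a := by
    intro k j a
    by_cases hx : 0 < x k j a
    · have h1 : ε ≤ x k j a / (|z k j a| + 1) := by
        have := Finset.inf'_le (b := (⟨k, (j, a)⟩ : Σ k : Fin K, Fin (J k) × Fin 2))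
          (fun p => if 0 < x p.1 p.2.1 p.2.2
            then x p.1 p.2.1 p.2.2 / (|z p.1 p.2.1 p.2.2| + 1) else 1) (mem_univ _)
        rw [if_pos hx] at this
        exact this
      have h2 : ε * |z k j a| ≤ (x k j a / (|z k j a| + 1)) * |z k j a| :=
        mul_le_mul_of_nonneg_right h1 (abs_nonneg _)
      have h3 : (x k j a / (|z k j a| + 1)) * |z k j a| ≤ x k j a := by
        rw [div_mul_eq_mul_div, div_le_iff₀ (by positivity)]
        nlinarith [abs_nonneg (z k j a), hx.le]
      linarith
    · rw [hzsupp k j a hx, abs_zero, mul_zero]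
      exact hxnn k j a
  refine ⟨fun k j a => ε * z k j a, ?_, ?_, ?_, ?_, ?_⟩
  · intro hcontra
    apply hz0
    funext k j a
    have h1 : ε * z k j a = 0 := congrFun (congrFun (congrFun hcontra k) j) a
    have := mul_eq_zero.mp h1
    rcases this with h | h
    · exact absurd h (ne_of_gt hε)
    · exact h
  · intro k j a
    rw [abs_mul, abs_of_pos hε]
    exact hbound k j a
  · intro k j
    have : ∑ a : Fin 2, ∑ i, ε * z k i a * q k j i a
        = ε * ∑ a : Fin 2, ∑ i, z k i a * q k j i a := by
      simp only [Finset.mul_sum, mul_assoc]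
    rw [this]
    have := hbrowAll k j
    simp only [browF] at this
    rw [this, mul_zero]
  · intro k
    have : ∑ j, ∑ a : Fin 2, ε * z k j a = ε * ∑ j, ∑ a : Fin 2, z k j a := by
      simp only [Finset.mul_sum]
    rw [this]
    have := hmrowAll k
    simp only [mrowF] at this
    rw [this, mul_zero]
  · have : ∑ k, ∑ j, ε * z k j 1 = ε * ∑ k, ∑ j, z k j 1 := by
      simp only [Finset.mul_sum]
    rw [this]
    simp only [crowF] at hcrow
    rw [hcrow, mul_zero]

end PerturbLemma

section MainHelpers

private lemma sum3_add {K : ℕ} {J : Fin K → ℕ} (F G : (k : Fin K) → Fin (J k) → Fin 2 → ℝ) :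
    (∑ k, ∑ j, ∑ a : Fin 2, F k j a) + (∑ k, ∑ j, ∑ a : Fin 2, G k j a)
      = ∑ k, ∑ j, ∑ a : Fin 2, (F k j a + G k j a) := by
  simp only [Finset.sum_add_distrib]

private lemma term_le_sum3 {K : ℕ} {J : Fin K → ℕ}
    (F : (k : Fin K) → Fin (J k) → Fin 2 → ℝ) (hF : ∀ k j a, 0 ≤ F k j a)
    (k : Fin K) (j : Fin (J k)) (a : Fin 2) :
    F k j a ≤ ∑ k, ∑ j, ∑ a : Fin 2, F k j a := by
  calc F k j a ≤ ∑ a' : Fin 2, F k j a' :=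
        Finset.single_le_sum (fun a' _ => hF k j a') (mem_univ a)
    _ ≤ ∑ j', ∑ a' : Fin 2, F k j' a' :=
        Finset.single_le_sum (fun j' _ => Finset.sum_nonneg fun a' _ => hF k j' a')
          (mem_univ j)
    _ ≤ ∑ k', ∑ j', ∑ a' : Fin 2, F k' j' a' :=
        Finset.single_le_sum (f := fun k' => ∑ j', ∑ a' : Fin 2, F k' j' a')
          (fun k' _ => Finset.sum_nonneg fun j' _ => Finset.sum_nonneg fun a' _ => hF k' j' a')
          (mem_univ k)

end MainHelpers

/-- For a fixed population (`λ_k = 0` for all `k`), if the feasible set of (LP) is nonempty,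
then (LP) admits an optimal solution `x*` such that `x*⁰_{j,k} · x*¹_{j,k} > 0` for at most one
pair `(j,k)`. -/
theorem lp_fixed_population_exists_optimal_almost_nondegenerate
    {K : ℕ} (hK : 1 ≤ K) {J : Fin K → ℕ} (hJ : ∀ k, 1 ≤ J k)
    (lam : Fin K → ℝ) (hfixed : ∀ k, lam k = 0)
    (p : (k : Fin K) → Fin (J k) → ℝ)
    (hp : ∀ k j, 0 ≤ p k j) (hpsum : ∀ k, ∑ j, p k j = 1)
    (q : (k : Fin K) → Fin (J k) → Fin (J k) → Fin 2 → ℝ)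
    (q0 : (k : Fin K) → Fin (J k) → Fin 2 → ℝ)
    (hq : ∀ k (j i : Fin (J k)) (a : Fin 2), j ≠ i → 0 ≤ q k j i a)
    (hq0 : ∀ k (i : Fin (J k)) (a : Fin 2), 0 ≤ q0 k i a)
    (hdiag : ∀ k (j : Fin (J k)) (a : Fin 2),
      q k j j a = -(q0 k j a + ∑ i ∈ univ.filter (fun i => i ≠ j), q k i j a))
    (C : (k : Fin K) → Fin (J k) → Fin 2 → ℝ)
    (α : ℝ) (hα : 0 < α)
    (xinit : Fin K → ℝ) (hxinit : ∀ k, 0 ≤ xinit k)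
    (hfeas : ∃ x, LPFeasible lam p q α xinit x) :
    ∃ xstar, LPFeasible lam p q α xinit xstar ∧
      (∀ y, LPFeasible lam p q α xinit y → LPCost C xstar ≤ LPCost C y) ∧
      (∀ s t : Σ k : Fin K, Fin (J k),
        0 < xstar s.1 s.2 0 * xstar s.1 s.2 1 →
        0 < xstar t.1 t.2 0 * xstar t.1 t.2 1 → s = t) := by
  classical
  set S : Set ((k : Fin K) → Fin (J k) → Fin 2 → ℝ) :=
    {y | LPFeasible lam p q α xinit y} with hSdef
  have hSne : S.Nonempty := hfeas
  have happcont : ∀ (k : Fin K) (j : Fin (J k)) (a : Fin 2),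
      Continuous fun y : (k : Fin K) → Fin (J k) → Fin 2 → ℝ => y k j a :=
    fun k j a => (continuous_apply a).comp ((continuous_apply j).comp (continuous_apply k))
  -- closedness of the feasible set
  have hSclosed : IsClosed S := by
    have h1 : IsClosed {y : (k : Fin K) → Fin (J k) → Fin 2 → ℝ |
        ∀ (k : Fin K) (j : Fin (J k)),
          (0:ℝ) = lam k * p k j + ∑ a : Fin 2, ∑ i, y k i a * q k j i a} := by
      rw [Set.setOf_forall]
      refine isClosed_iInter fun k => ?_
      rw [Set.setOf_forall]
      refine isClosed_iInter fun j => ?_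
      refine isClosed_eq continuous_const ?_
      exact continuous_const.add (continuous_finset_sum _ fun a _ =>
        continuous_finset_sum _ fun i _ => (happcont k i a).mul continuous_const)
    have h2 : IsClosed {y : (k : Fin K) → Fin (J k) → Fin 2 → ℝ |
        ∑ k, ∑ j, y k j 1 ≤ α} :=
      isClosed_le (continuous_finset_sum _ fun k _ =>
        continuous_finset_sum _ fun j _ => happcont k j 1) continuous_const
    have h3 : IsClosed {y : (k : Fin K) → Fin (J k) → Fin 2 → ℝ |
        ∀ k : Fin K, lam k = 0 → ∑ j, ∑ a : Fin 2, y k j a = xinit k} := by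
      rw [Set.setOf_forall]
      refine isClosed_iInter fun k => ?_
      have heq : {y : (k : Fin K) → Fin (J k) → Fin 2 → ℝ |
          lam k = 0 → ∑ j, ∑ a : Fin 2, y k j a = xinit k}
          = {y : (k : Fin K) → Fin (J k) → Fin 2 → ℝ |
          ∑ j, ∑ a : Fin 2, y k j a = xinit k} := by
        ext y
        simp [hfixed k]
      rw [heq]
      exact isClosed_eq (continuous_finset_sum _ fun j _ =>
        continuous_finset_sum _ fun a _ => happcont k j a) continuous_const
    have h4 : IsClosed {y : (k : Fin K) → Fin (J k) → Fin 2 → ℝ |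
        ∀ (k : Fin K) (j : Fin (J k)) (a : Fin 2), 0 ≤ y k j a} := by
      rw [Set.setOf_forall]
      refine isClosed_iInter fun k => ?_
      rw [Set.setOf_forall]
      refine isClosed_iInter fun j => ?_
      rw [Set.setOf_forall]
      refine isClosed_iInter fun a => ?_
      exact isClosed_le continuous_const (happcont k j a)
    have hSeq : S = ({y : (k : Fin K) → Fin (J k) → Fin 2 → ℝ |
          ∀ (k : Fin K) (j : Fin (J k)),
            (0:ℝ) = lam k * p k j + ∑ a : Fin 2, ∑ i, y k i a * q k j i a}
        ∩ {y | ∑ k, ∑ j, y k j 1 ≤ α})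
        ∩ ({y | ∀ k : Fin K, lam k = 0 → ∑ j, ∑ a : Fin 2, y k j a = xinit k}
        ∩ {y | ∀ (k : Fin K) (j : Fin (J k)) (a : Fin 2), 0 ≤ y k j a}) := by
      ext y
      simp only [hSdef, LPFeasible, Set.mem_setOf_eq, Set.mem_inter_iff]
      tauto
    rw [hSeq]
    exact (h1.inter h2).inter (h3.inter h4)
  -- compactness of the feasible set
  have hball : ∀ y ∈ S, ∀ (k : Fin K) (j : Fin (J k)) (a : Fin 2),
      y k j a ∈ Set.Icc (0:ℝ) (xinit k) := by
    intro y hy k j a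
    obtain ⟨hb, hc, hm, hn⟩ := hy
    refine ⟨hn k j a, ?_⟩
    have hmk := hm k (hfixed k)
    calc y k j a ≤ ∑ a' : Fin 2, y k j a' :=
          Finset.single_le_sum (fun a' _ => hn k j a') (mem_univ a)
      _ ≤ ∑ j', ∑ a' : Fin 2, y k j' a' :=
          Finset.single_le_sum
            (fun j' _ => Finset.sum_nonneg fun a' _ => hn k j' a') (mem_univ j)
      _ = xinit k := hmk
  have hbox : IsCompact {y : (k : Fin K) → Fin (J k) → Fin 2 → ℝ |
      ∀ (k : Fin K) (j : Fin (J k)) (a : Fin 2), y k j a ∈ Set.Icc (0:ℝ) (xinit k)} := by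
    have heq : {y : (k : Fin K) → Fin (J k) → Fin 2 → ℝ |
        ∀ (k : Fin K) (j : Fin (J k)) (a : Fin 2), y k j a ∈ Set.Icc (0:ℝ) (xinit k)}
        = Set.univ.pi fun k : Fin K =>
            Set.univ.pi fun j : Fin (J k) =>
              Set.univ.pi fun _ : Fin 2 => Set.Icc (0:ℝ) (xinit k) := by
      ext y
      simp only [Set.mem_setOf_eq, Set.mem_pi, Set.mem_univ, true_implies]
    rw [heq]
    exact isCompact_univ_pi fun k => isCompact_univ_pi fun j =>
      isCompact_univ_pi fun a => isCompact_Icc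
  have hScompact : IsCompact S :=
    hbox.of_isClosed_subset hSclosed fun y hy => hball y hy
  -- minimize the cost
  have hCcont : Continuous (LPCost C) := by
    show Continuous fun y : (k : Fin K) → Fin (J k) → Fin 2 → ℝ =>
      ∑ k, ∑ j, ∑ a : Fin 2, C k j a * y k j a
    exact continuous_finset_sum _ fun k _ => continuous_finset_sum _ fun j _ =>
      continuous_finset_sum _ fun a _ => continuous_const.mul (happcont k j a)
  obtain ⟨x₀, hx₀S, hx₀min⟩ := hScompact.exists_isMinOn hSne hCcont.continuousOn
  set Opt : Set ((k : Fin K) → Fin (J k) → Fin 2 → ℝ) :=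
    S ∩ {y | LPCost C y = LPCost C x₀} with hOptdef
  have hOptne : Opt.Nonempty := ⟨x₀, hx₀S, rfl⟩
  have hOptcompact : IsCompact Opt :=
    hScompact.inter_right (isClosed_eq hCcont continuous_const)
  have hfcont : Continuous fun y : (k : Fin K) → Fin (J k) → Fin 2 → ℝ =>
      ∑ k, ∑ j, ∑ a : Fin 2, (y k j a)^2 :=
    continuous_finset_sum _ fun k _ => continuous_finset_sum _ fun j _ =>
      continuous_finset_sum _ fun a _ => (happcont k j a).pow 2
  obtain ⟨xs, hxsOpt, hxsmax⟩ := hOptcompact.exists_isMaxOn hOptne hfcont.continuousOn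
  obtain ⟨hxsS, hxscost⟩ := hxsOpt
  have hxscost' : LPCost C xs = LPCost C x₀ := hxscost
  refine ⟨xs, hxsS, ?_, ?_⟩
  · intro y hy
    rw [hxscost']
    exact isMinOn_iff.mp hx₀min y hy
  · intro s t hspos htpos
    by_contra hst
    have hnn := hxsS.2.2.2
    have hfac : ∀ u : Σ k : Fin K, Fin (J k), 0 < xs u.1 u.2 0 * xs u.1 u.2 1 →
        0 < xs u.1 u.2 0 ∧ 0 < xs u.1 u.2 1 := by
      intro u hu
      rcases mul_pos_iff.mp hu with h | h
      · exact h
      · exact absurd h.1 (not_lt.mpr (hnn u.1 u.2 0))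
    obtain ⟨hs0, hs1⟩ := hfac s hspos
    obtain ⟨ht0, ht1⟩ := hfac t htpos
    have hbal' : ∀ (k : Fin K) (j : Fin (J k)),
        ∑ a : Fin 2, ∑ i, xs k i a * q k j i a = 0 := by
      intro k j
      have h := hxsS.1 k j
      rw [hfixed k, zero_mul, zero_add] at h
      exact h.symm
    obtain ⟨w, hw0, hwle, hwbal, hwmass, hwcap⟩ :=
      exists_perturbation hJ q q0 hq hq0 hdiag xs hbal' hnn s t hst hs0 hs1 ht0 ht1
    -- the perturbed points are feasible
    have hfeaspm : ∀ σ : ℝ, |σ| ≤ 1 →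
        LPFeasible lam p q α xinit (fun k j a => xs k j a + σ * w k j a) := by
      intro σ hσ
      obtain ⟨hbalx, hcapx, hmassx, _⟩ := hxsS
      refine ⟨?_, ?_, ?_, ?_⟩
      · intro k j
        have hsplit : ∑ a : Fin 2, ∑ i, (xs k i a + σ * w k i a) * q k j i a
            = (∑ a : Fin 2, ∑ i, xs k i a * q k j i a)
              + σ * ∑ a : Fin 2, ∑ i, w k i a * q k j i a := by
          simp only [add_mul, Finset.sum_add_distrib, Finset.mul_sum, mul_assoc]
        rw [hsplit, hwbal k j, mul_zero, add_zero]
        exact hbalx k j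
      · have hsplit : ∑ k, ∑ j, (xs k j 1 + σ * w k j 1)
            = (∑ k, ∑ j, xs k j 1) + σ * ∑ k, ∑ j, w k j 1 := by
          simp only [Finset.sum_add_distrib, Finset.mul_sum]
        rw [hsplit, hwcap, mul_zero, add_zero]
        exact hcapx
      · intro k hk
        have hsplit : ∑ j, ∑ a : Fin 2, (xs k j a + σ * w k j a)
            = (∑ j, ∑ a : Fin 2, xs k j a) + σ * ∑ j, ∑ a : Fin 2, w k j a := by
          simp only [Finset.sum_add_distrib, Finset.mul_sum]
        rw [hsplit, hwmass k, mul_zero, add_zero]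
        exact hmassx k hk
      · intro k j a
        show 0 ≤ xs k j a + σ * w k j a
        have h1 := hwle k j a
        have h2 : |σ * w k j a| ≤ |w k j a| := by
          rw [abs_mul]
          nlinarith [abs_nonneg (w k j a), abs_nonneg σ]
        have h3 := neg_abs_le (σ * w k j a)
        linarith
    have hyp := hfeaspm 1 (by norm_num)
    have hym := hfeaspm (-1) (by norm_num)
    -- costs of the perturbed points
    have hcostp : ∀ σ : ℝ, LPCost C (fun k j a => xs k j a + σ * w k j a)
        = LPCost C xs + σ * ∑ k, ∑ j, ∑ a : Fin 2, C k j a * w k j a := by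
      intro σ
      simp only [LPCost, mul_add, Finset.sum_add_distrib, Finset.mul_sum, mul_left_comm]
    have hl1 := isMinOn_iff.mp hx₀min _ hyp
    have hl2 := isMinOn_iff.mp hx₀min _ hym
    rw [hcostp 1] at hl1
    rw [hcostp (-1)] at hl2
    have hD0 : ∑ k, ∑ j, ∑ a : Fin 2, C k j a * w k j a = 0 := by
      rw [hxscost'] at hl1 hl2
      linarith
    have hypOpt : (fun k j a => xs k j a + (1:ℝ) * w k j a) ∈ Opt := by
      refine ⟨hyp, ?_⟩
      show LPCost C _ = LPCost C x₀
      rw [hcostp 1, hD0, mul_zero, add_zero, hxscost']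
    have hymOpt : (fun k j a => xs k j a + (-1:ℝ) * w k j a) ∈ Opt := by
      refine ⟨hym, ?_⟩
      show LPCost C _ = LPCost C x₀
      rw [hcostp (-1), hD0, mul_zero, add_zero, hxscost']
    -- strict convexity contradiction
    have hmax1 := isMaxOn_iff.mp hxsmax _ hypOpt
    have hmax2 := isMaxOn_iff.mp hxsmax _ hymOpt
    have hfid : (∑ k, ∑ j, ∑ a : Fin 2, (xs k j a + (1:ℝ) * w k j a)^2)
        + (∑ k, ∑ j, ∑ a : Fin 2, (xs k j a + (-1:ℝ) * w k j a)^2)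
        = 2 * (∑ k, ∑ j, ∑ a : Fin 2, (xs k j a)^2)
          + 2 * (∑ k, ∑ j, ∑ a : Fin 2, (w k j a)^2) := by
      calc (∑ k, ∑ j, ∑ a : Fin 2, (xs k j a + (1:ℝ) * w k j a)^2)
          + (∑ k, ∑ j, ∑ a : Fin 2, (xs k j a + (-1:ℝ) * w k j a)^2)
          = ∑ k, ∑ j, ∑ a : Fin 2,
              ((xs k j a + (1:ℝ) * w k j a)^2 + (xs k j a + (-1:ℝ) * w k j a)^2) :=
            sum3_add _ _
        _ = ∑ k, ∑ j, ∑ a : Fin 2, (2 * (xs k j a)^2 + 2 * (w k j a)^2) := by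
            refine Finset.sum_congr rfl fun k _ => Finset.sum_congr rfl fun j _ =>
              Finset.sum_congr rfl fun a _ => by ring
        _ = 2 * (∑ k, ∑ j, ∑ a : Fin 2, (xs k j a)^2)
            + 2 * (∑ k, ∑ j, ∑ a : Fin 2, (w k j a)^2) := by
            rw [← sum3_add]
            simp only [Finset.mul_sum]
    have hfw : 0 < ∑ k, ∑ j, ∑ a : Fin 2, (w k j a)^2 := by
      have hex : ∃ k j a, w k j a ≠ 0 := by
        by_contra hc
        push_neg at hc
        apply hw0
        funext k j a
        simpa using hc k j a
      obtain ⟨k, j, a, hkja⟩ := hex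
      have h1 : (0:ℝ) < (w k j a)^2 := by positivity
      have h2 := term_le_sum3 (fun k j a => (w k j a)^2)
        (fun k j a => sq_nonneg _) k j a
      linarith
    linarith
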